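/- Define h(x) = V₁(x, (x+a)/(x−1), x) = (2x+a−1)²(x+1)²/(x(x+a)(x−1)) for x > 1. Then h has a unique critical point at x = x_c = 1+√(1+a), which is a strict minimum, h(x) → +∞ as x → 1⁺ and as x → +∞; consequently, for every k > h(x_c) the equation h(x) = k has exactly two solutions in (1, ∞), one in (1, x_c) and one in (x_c, ∞). -/

import Mathlib

open Filter Set

/-- The restriction `h(x) = V₁(x, (x+a)/(x-1), x) = (2x+a-1)²(x+1)²/(x(x+a)(x-1))`
of `V₁` to the curve of 2-periodic points has a unique critical point at
`x_c = 1 + √(1+a)`, a strict minimum; it tends to `+∞` as `x → 1⁺` and as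
`x → +∞`; hence for each `k > h(x_c)` the equation `h(x) = k` has exactly one
solution in `(1, x_c)` and exactly one in `(x_c, ∞)`. -/
theorem lyness_V1_on_two_periodic_curve (a : ℝ) (ha : 0 < a) :
    let xc : ℝ := 1 + Real.sqrt (1 + a)
    let V1 : ℝ → ℝ → ℝ → ℝ := fun x y z =>
      (x + 1) * (y + 1) * (z + 1) * (a + x + y + z) / (x * y * z)
    let h : ℝ → ℝ := fun x =>
      (2 * x + a - 1) ^ 2 * (x + 1) ^ 2 / (x * (x + a) * (x - 1))
    (∀ x : ℝ, 1 < x → V1 x ((x + a) / (x - 1)) x = h x) ∧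
    (∀ x : ℝ, 1 < x → (deriv h x = 0 ↔ x = xc)) ∧
    (∀ x : ℝ, 1 < x → x ≠ xc → h xc < h x) ∧
    Tendsto h (nhdsWithin 1 (Ioi 1)) atTop ∧
    Tendsto h atTop atTop ∧
    (∀ k : ℝ, h xc < k →
      (∃! x : ℝ, x ∈ Ioo 1 xc ∧ h x = k) ∧ (∃! x : ℝ, x ∈ Ioi xc ∧ h x = k)) := by
  intro xc V1 h
  have hV1def : ∀ x y z : ℝ, V1 x y z =
      (x + 1) * (y + 1) * (z + 1) * (a + x + y + z) / (x * y * z) := fun _ _ _ => rfl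
  have hh : ∀ x : ℝ, h x =
      (2 * x + a - 1) ^ 2 * (x + 1) ^ 2 / (x * (x + a) * (x - 1)) := fun _ => rfl
  have hs1 : 1 < Real.sqrt (1 + a) := by
    have h1 : Real.sqrt 1 < Real.sqrt (1 + a) := Real.sqrt_lt_sqrt (by norm_num) (by linarith)
    simpa using h1
  have hssq : Real.sqrt (1 + a) ^ 2 = 1 + a := Real.sq_sqrt (by linarith)
  have hxcdef : xc = 1 + Real.sqrt (1 + a) := rfl
  have hxc1 : (1 : ℝ) < xc := by rw [hxcdef]; linarith
  have hxcq : xc ^ 2 - 2 * xc - a = 0 := by rw [hxcdef]; linear_combination hssq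
  have hquad : ∀ x : ℝ, x ^ 2 - 2 * x - a = (x - xc) * (x - (2 - xc)) := by
    intro x
    linear_combination hssq
  have hDpos : ∀ x : ℝ, 1 < x → 0 < x * (x + a) * (x - 1) := fun x hx =>
    mul_pos (mul_pos (by linarith) (by linarith)) (by linarith)
  have hQpos : ∀ x : ℝ, 1 < x →
      0 < (x + 1) * (4 * x ^ 2 * (x - 1) + 8 * a * x ^ 2 + (a - 1) ^ 2 * (3 * x - 1)) := by
    intro x hx
    have hx0 : (0 : ℝ) < x := by linarith
    have t1 : 0 ≤ 4 * x ^ 2 * (x - 1) := by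
      apply mul_nonneg (by positivity); linarith
    have t2 : 0 < 8 * a * x ^ 2 := by positivity
    have t3 : 0 ≤ (a - 1) ^ 2 * (3 * x - 1) := by
      apply mul_nonneg (sq_nonneg _); linarith
    have : 0 < 4 * x ^ 2 * (x - 1) + 8 * a * x ^ 2 + (a - 1) ^ 2 * (3 * x - 1) := by linarith
    exact mul_pos (by linarith) this
  -- the derivative of h
  have hder : ∀ x : ℝ, 1 < x → HasDerivAt h
      ((x ^ 2 - 2 * x - a) *
        ((x + 1) * (4 * x ^ 2 * (x - 1) + 8 * a * x ^ 2 + (a - 1) ^ 2 * (3 * x - 1))) /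
        (x * (x + a) * (x - 1)) ^ 2) x := by
    intro x hx
    have hD0 : x * (x + a) * (x - 1) ≠ 0 := (hDpos x hx).ne'
    have hA : HasDerivAt (fun x : ℝ => 2 * x + a - 1) 2 x := by
      simpa using (((hasDerivAt_id x).const_mul 2).add_const a).sub_const 1
    have hB : HasDerivAt (fun x : ℝ => x + 1) 1 x := (hasDerivAt_id x).add_const 1
    have hN : HasDerivAt (fun x : ℝ => (2 * x + a - 1) ^ 2 * (x + 1) ^ 2)
        ((2 * (2 * x + a - 1) ^ 1 * 2) * (x + 1) ^ 2 +
          (2 * x + a - 1) ^ 2 * (2 * (x + 1) ^ 1 * 1)) x := (hA.pow 2).mul (hB.pow 2)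
    have hD : HasDerivAt (fun x : ℝ => x * (x + a) * (x - 1))
        ((1 * (x + a) + x * 1) * (x - 1) + x * (x + a) * 1) x :=
      (((hasDerivAt_id x).mul ((hasDerivAt_id x).add_const a)).mul
        ((hasDerivAt_id x).sub_const 1))
    have hdiv := hN.div hD hD0
    refine hdiv.congr_deriv ?_
    rw [div_eq_div_iff (pow_ne_zero 2 hD0) (pow_ne_zero 2 hD0)]
    ring
  have hderiv : ∀ x : ℝ, 1 < x → deriv h x =
      (x ^ 2 - 2 * x - a) *
        ((x + 1) * (4 * x ^ 2 * (x - 1) + 8 * a * x ^ 2 + (a - 1) ^ 2 * (3 * x - 1))) /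
        (x * (x + a) * (x - 1)) ^ 2 := fun x hx => (hder x hx).deriv
  -- strict monotonicity on the two sides
  have hanti : StrictAntiOn h (Ioc 1 xc) := by
    apply strictAntiOn_of_deriv_neg (convex_Ioc 1 xc)
    · exact fun x hx => ((hder x hx.1).continuousAt).continuousWithinAt
    · intro x hx
      rw [interior_Ioc] at hx
      rw [hderiv x hx.1]
      apply div_neg_of_neg_of_pos
      · rw [hquad x]
        have h1 : x - xc < 0 := by linarith [hx.2]
        have h2 : 0 < x - (2 - xc) := by linarith [hx.1, hxc1]
        exact mul_neg_of_neg_of_pos (mul_neg_of_neg_of_pos h1 h2) (hQpos x hx.1)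
      · exact pow_pos (hDpos x hx.1) 2
  have hmono : StrictMonoOn h (Ici xc) := by
    apply strictMonoOn_of_deriv_pos (convex_Ici xc)
    · exact fun x hx => ((hder x (lt_of_lt_of_le hxc1 hx)).continuousAt).continuousWithinAt
    · intro x hx
      rw [interior_Ici] at hx
      have hx1 : 1 < x := lt_trans hxc1 hx
      rw [hderiv x hx1]
      apply div_pos
      · rw [hquad x]
        have hx' : xc < x := hx
        have h1 : 0 < x - xc := by linarith
        have h2 : 0 < x - (2 - xc) := by linarith
        exact mul_pos (mul_pos h1 h2) (hQpos x hx1)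
      · exact pow_pos (hDpos x hx1) 2
  -- part 3: strict minimum
  have hmin : ∀ x : ℝ, 1 < x → x ≠ xc → h xc < h x := by
    intro x hx hne
    rcases lt_or_gt_of_ne hne with hlt | hgt
    · exact hanti ⟨hx, le_of_lt hlt⟩ ⟨hxc1, le_refl xc⟩ hlt
    · exact hmono (self_mem_Ici) (le_of_lt hgt) hgt
  -- part 4: blow-up at 1⁺
  have hlim1 : Tendsto h (nhdsWithin 1 (Ioi 1)) atTop := by
    have hc : Continuous (fun x : ℝ => (2 * x + a - 1) ^ 2 * (x + 1) ^ 2) := by fun_prop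
    have hNlim : Tendsto (fun x : ℝ => (2 * x + a - 1) ^ 2 * (x + 1) ^ 2)
        (nhdsWithin 1 (Ioi 1)) (nhds ((2 * 1 + a - 1) ^ 2 * (1 + 1) ^ 2)) :=
      (hc.tendsto 1).mono_left nhdsWithin_le_nhds
    have hDlim : Tendsto (fun x : ℝ => x * (x + a) * (x - 1))
        (nhdsWithin 1 (Ioi 1)) (nhdsWithin 0 (Ioi 0)) := by
      apply tendsto_nhdsWithin_of_tendsto_nhds_of_eventually_within
      · have hc : Continuous (fun x : ℝ => x * (x + a) * (x - 1)) := by fun_prop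
        have h0 : (1 : ℝ) * (1 + a) * (1 - 1) = 0 := by ring
        rw [← h0]
        exact (hc.tendsto 1).mono_left nhdsWithin_le_nhds
      · filter_upwards [self_mem_nhdsWithin] with x hx
        exact hDpos x hx
    have hInv : Tendsto (fun x : ℝ => (x * (x + a) * (x - 1))⁻¹)
        (nhdsWithin 1 (Ioi 1)) atTop := tendsto_inv_nhdsGT_zero.comp hDlim
    have hcpos : (0:ℝ) < (2 * 1 + a - 1) ^ 2 * (1 + 1) ^ 2 := by
      have hb : (0:ℝ) < 2 * 1 + a - 1 := by linarith
      positivity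
    have hmul := hNlim.pos_mul_atTop hcpos hInv
    refine hmul.congr (fun x => ?_)
    rw [hh x, div_eq_mul_inv]
  -- part 5: blow-up at ∞
  have hlimtop : Tendsto h atTop atTop := by
    refine tendsto_atTop_mono' atTop ?_
      ((tendsto_id (α := ℝ)).atTop_div_const (by linarith : (0:ℝ) < 1 + a))
    · filter_upwards [eventually_ge_atTop (2 : ℝ)] with x hx
      have hx1 : (1 : ℝ) < x := by linarith
      simp only [id_eq]
      rw [hh x, div_le_div_iff₀ (by linarith) (hDpos x hx1)]
      have e1 : x ^ 2 ≤ (2 * x + a - 1) ^ 2 := by nlinarith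
      have e2 : x ^ 2 ≤ (x + 1) ^ 2 := by nlinarith
      have e3 : x * (x * (x + a) * (x - 1)) ≤ (1 + a) * (x ^ 2 * x ^ 2) := by
        nlinarith [mul_nonneg (mul_nonneg ha.le (pow_nonneg (by linarith : (0:ℝ) ≤ x) 3))
            (by linarith : (0:ℝ) ≤ x - 1),
          pow_pos (show (0:ℝ) < x by linarith) 3,
          mul_pos ha (pow_pos (show (0:ℝ) < x by linarith) 2)]
      have e4 : x ^ 2 * x ^ 2 ≤ (2 * x + a - 1) ^ 2 * (x + 1) ^ 2 :=
        mul_le_mul e1 e2 (by positivity) (by positivity)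
      nlinarith [mul_le_mul_of_nonneg_left e4 (by linarith : (0:ℝ) ≤ 1 + a)]
  refine ⟨?_, ?_, hmin, hlim1, hlimtop, ?_⟩
  -- part 1: V1 identity
  · intro x hx
    rw [hV1def, hh]
    have hx0 : x ≠ 0 := by intro hc; rw [hc] at hx; linarith
    have hx1 : x - 1 ≠ 0 := by intro hc; linarith [sub_eq_zero.mp hc]
    have hxa : x + a ≠ 0 := by intro hc; nlinarith [hc]
    field_simp
    ring
  -- part 2: critical point characterization
  · intro x hx
    rw [hderiv x hx]
    constructor
    · intro h0
      rcases div_eq_zero_iff.mp h0 with h1 | h1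
      · rcases mul_eq_zero.mp h1 with h2 | h2
        · rw [hquad x] at h2
          rcases mul_eq_zero.mp h2 with h3 | h3
          · linarith [sub_eq_zero.mp h3]
          · exfalso
            have hp : (0:ℝ) < x - (2 - xc) := by linarith
            linarith [sub_eq_zero.mp h3]
        · exact absurd h2 (hQpos x hx).ne'
      · exact absurd h1 (pow_ne_zero 2 (hDpos x hx).ne' h1).elim
    · intro hxe
      rw [hxe]
      rw [show xc ^ 2 - 2 * xc - a = 0 from hxcq]
      simp
  -- part 6
  · intro k hk
    constructor
    · -- solution in (1, xc)
      have hev : ∀ᶠ x in nhdsWithin 1 (Ioi 1), k < h x := hlim1.eventually_gt_atTop k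
      have hmem : Ioo (1:ℝ) xc ∈ nhdsWithin 1 (Ioi 1) :=
        Ioo_mem_nhdsGT_of_mem ⟨le_refl 1, hxc1⟩
      obtain ⟨x₀, hkx₀, hx₀⟩ := (hev.and (eventually_of_mem hmem fun x hx => hx)).exists
      have hcont : ContinuousOn h (Icc x₀ xc) := fun x hx =>
        ((hder x (lt_of_lt_of_le hx₀.1 hx.1)).continuousAt).continuousWithinAt
      have hks : k ∈ Ioo (h xc) (h x₀) := ⟨hk, hkx₀⟩
      obtain ⟨x, hxm, hxv⟩ := intermediate_value_Ioo' (le_of_lt hx₀.2) hcont hks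
      refine ⟨x, ⟨⟨lt_trans hx₀.1 hxm.1, hxm.2⟩, hxv⟩, ?_⟩
      rintro y ⟨hym, hyv⟩
      exact hanti.injOn ⟨hym.1, le_of_lt hym.2⟩
        ⟨lt_trans hx₀.1 hxm.1, le_of_lt hxm.2⟩ (by rw [hyv, hxv])
    · -- solution in (xc, ∞)
      have hev : ∀ᶠ x in atTop, k < h x := hlimtop.eventually_gt_atTop k
      obtain ⟨M, hM⟩ := eventually_atTop.mp hev
      set x₁ : ℝ := max M (xc + 1) with hx₁def
      have hx₁M : M ≤ x₁ := le_max_left _ _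
      have hx₁xc : xc < x₁ := lt_of_lt_of_le (by linarith) (le_max_right _ _)
      have hkx₁ : k < h x₁ := hM x₁ hx₁M
      have hcont : ContinuousOn h (Icc xc x₁) := fun x hx =>
        ((hder x (lt_of_lt_of_le hxc1 hx.1)).continuousAt).continuousWithinAt
      have hks : k ∈ Ioo (h xc) (h x₁) := ⟨hk, hkx₁⟩
      obtain ⟨x, hxm, hxv⟩ := intermediate_value_Ioo (le_of_lt hx₁xc) hcont hks
      refine ⟨x, ⟨hxm.1, hxv⟩, ?_⟩
      rintro y ⟨hym, hyv⟩
      exact hmono.injOn (mem_Ici.mpr (le_of_lt hym)) (mem_Ici.mpr (le_of_lt hxm.1)) (by rw [hyv, hxv])
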